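/- (Coefficient formulas.) Assume t_k = n_k^⊥ for k=1,2,3. Let γ₁,γ₂,γ₃∈ℝ² be constant vectors and set τ := Curl^s( Σ_{i=1}^{3} γ_i φ_i ). Then for each k=1,2,3 the coefficients are recovered from τ by γ_k·n_k = (ℓ_k²/2) n_kᵀ (∂_{t_k}τ) n_k and γ_k·t_k = (ℓ_k²/2) n_kᵀ (∂_{n_k}τ) n_k + ℓ_k² t_kᵀ (∂_{t_k}τ) n_k, where ∂_gτ is the (constant) entrywise directional derivative of the affine matrix field τ along g. -/

import Mathlib

open Matrix

noncomputable def Curl (r : (Fin 2 → ℝ) → Fin 2 → ℝ) (x : Fin 2 → ℝ) :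
    Matrix (Fin 2) (Fin 2) ℝ :=
  Matrix.of fun i j =>
    if j = 0 then -(fderiv ℝ r x ![0, 1] i) else fderiv ℝ r x ![1, 0] i

noncomputable def CurlS (r : (Fin 2 → ℝ) → Fin 2 → ℝ) (x : Fin 2 → ℝ) :
    Matrix (Fin 2) (Fin 2) ℝ :=
  (2⁻¹ : ℝ) • (Curl r x + (Curl r x)ᵀ)

noncomputable def DirD (τ : (Fin 2 → ℝ) → Matrix (Fin 2) (Fin 2) ℝ) (g : Fin 2 → ℝ) :
    Matrix (Fin 2) (Fin 2) ℝ :=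
  Matrix.of fun i j => fderiv ℝ (fun x => τ x i j) 0 g

noncomputable def lmap (A B : ℝ) : (Fin 2 → ℝ) →L[ℝ] ℝ :=
  A • (ContinuousLinearMap.proj 0) + B • (ContinuousLinearMap.proj 1)

lemma lmap_apply (A B : ℝ) (w : Fin 2 → ℝ) : lmap A B w = A * w 0 + B * w 1 := by
  simp [lmap]

lemma hasFDerivAt_affine (A B C : ℝ) (x : Fin 2 → ℝ) :
    HasFDerivAt (fun y : Fin 2 → ℝ => A * y 0 + B * y 1 + C) (lmap A B) x :=
  (((hasFDerivAt_apply 0 x).const_mul A).add ((hasFDerivAt_apply 1 x).const_mul B)).add_const C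

def IsAff (f : (Fin 2 → ℝ) → ℝ) : Prop := ∃ A B C : ℝ, ∀ x, f x = A * x 0 + B * x 1 + C

lemma IsAff.fderiv_eval {f : (Fin 2 → ℝ) → ℝ} (hf : IsAff f) (g : Fin 2 → ℝ) :
    fderiv ℝ f 0 g = f g - f 0 := by
  obtain ⟨A, B, C, h⟩ := hf
  have hfe : f = fun y : Fin 2 → ℝ => A * y 0 + B * y 1 + C := funext h
  subst hfe
  rw [(hasFDerivAt_affine A B C 0).fderiv, lmap_apply]
  simp

lemma isAff_const (c : ℝ) : IsAff (fun _ => c) := ⟨0, 0, c, fun x => by ring⟩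

lemma IsAff.add {f g : (Fin 2 → ℝ) → ℝ} (hf : IsAff f) (hg : IsAff g) :
    IsAff (fun x => f x + g x) := by
  obtain ⟨A, B, C, h⟩ := hf; obtain ⟨A', B', C', h'⟩ := hg
  exact ⟨A + A', B + B', C + C', fun x => by simp only [h, h']; ring⟩

lemma IsAff.neg {f : (Fin 2 → ℝ) → ℝ} (hf : IsAff f) : IsAff (fun x => -(f x)) := by
  obtain ⟨A, B, C, h⟩ := hf
  exact ⟨-A, -B, -C, fun x => by simp only [h]; ring⟩

lemma IsAff.mul_const {f : (Fin 2 → ℝ) → ℝ} (hf : IsAff f) (c : ℝ) :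
    IsAff (fun x => f x * c) := by
  obtain ⟨A, B, C, h⟩ := hf
  exact ⟨A * c, B * c, C * c, fun x => by simp only [h]; ring⟩

lemma IsAff.const_mul {f : (Fin 2 → ℝ) → ℝ} (hf : IsAff f) (c : ℝ) :
    IsAff (fun x => c * f x) := by
  obtain ⟨A, B, C, h⟩ := hf
  exact ⟨c * A, c * B, c * C, fun x => by simp only [h]; ring⟩

lemma isAff_sum {ι : Type*} (s : Finset ι) (f : ι → (Fin 2 → ℝ) → ℝ)
    (h : ∀ i ∈ s, IsAff (f i)) : IsAff (fun x => ∑ i ∈ s, f i x) := by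
  classical
  induction s using Finset.cons_induction with
  | empty => simpa using isAff_const 0
  | cons i s hi ih =>
    simp only [Finset.sum_cons]
    exact (h i (Finset.mem_cons_self i s)).add (ih fun j hj => h j (Finset.mem_cons_of_mem hj))

lemma zmod3_sum' {M : Type*} [AddCommMonoid M] (f : ZMod 3 → M) :
    ∑ m : ZMod 3, f m = f 0 + f 1 + f 2 := by
  show ∑ m : Fin 3, f m = _
  exact Fin.sum_univ_three f

lemma zmod3_sum {M : Type*} [AddCommMonoid M] (f : ZMod 3 → M) (k : ZMod 3) :
    ∑ m : ZMod 3, f m = f (k - 1) + f k + f (k + 1) := by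
  have h : ∑ m : ZMod 3, f m = ∑ m : ZMod 3, f (m + (k - 1)) :=
    (Fintype.sum_equiv (Equiv.addRight (k - 1)) _ _ (fun m => rfl)).symm
  rw [h, zmod3_sum' (fun m => f (m + (k - 1)))]
  congr 2
  · rw [zero_add]
  · ring_nf
  · rw [show (2 : ZMod 3) = 1 + 1 by decide]; ring

set_option maxHeartbeats 2000000 in
theorem curlS_bubble_coefficient_formulas
    (p : ZMod 3 → Fin 2 → ℝ) (hp : AffineIndependent ℝ p)
    (lam : ZMod 3 → (Fin 2 → ℝ) → ℝ)
    (hlam_aff : ∀ k, ∃ a b c : ℝ, ∀ x, lam k x = a * x 0 + b * x 1 + c)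
    (hlam_val : ∀ k j, lam k (p j) = if k = j then 1 else 0)
    (n : ZMod 3 → Fin 2 → ℝ)
    (hn_unit : ∀ k, (n k 0) ^ 2 + (n k 1) ^ 2 = 1)
    (hn_perp : ∀ k, n k ⬝ᵥ (fun j => p (k + 1) j - p (k - 1) j) = 0)
    (t : ZMod 3 → Fin 2 → ℝ)
    (ht : ∀ k, t k = ![-(n k 1), n k 0])
    (L : ZMod 3 → ℝ)
    (hL : ∀ k, L k =
      Real.sqrt ((p (k + 1) 0 - p (k - 1) 0) ^ 2 + (p (k + 1) 1 - p (k - 1) 1) ^ 2))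
    (γ : ZMod 3 → Fin 2 → ℝ)
    (τ : (Fin 2 → ℝ) → Matrix (Fin 2) (Fin 2) ℝ)
    (hτ : τ = fun x => CurlS
      (fun y => ∑ i : ZMod 3, (lam (i - 1) y * lam (i + 1) y) • γ i) x)
    (k : ZMod 3) :
    γ k ⬝ᵥ n k = (L k) ^ 2 / 2 * (n k ⬝ᵥ (DirD τ (t k)) *ᵥ n k) ∧
    γ k ⬝ᵥ t k = (L k) ^ 2 / 2 * (n k ⬝ᵥ (DirD τ (n k)) *ᵥ n k) +
      (L k) ^ 2 * (t k ⬝ᵥ (DirD τ (t k)) *ᵥ n k) := by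
  choose a b c hab using hlam_aff
  subst hτ
  have hlamD : ∀ (m : ZMod 3) (x : Fin 2 → ℝ), HasFDerivAt (lam m) (lmap (a m) (b m)) x := by
    intro m x
    have he : lam m = fun y : Fin 2 → ℝ => a m * y 0 + b m * y 1 + c m := funext (hab m)
    rw [he]; exact hasFDerivAt_affine _ _ _ x
  have hr : ∀ x : Fin 2 → ℝ, HasFDerivAt (fun y => ∑ i : ZMod 3, (lam (i - 1) y * lam (i + 1) y) • γ i)
      (∑ i : ZMod 3, ((lam (i - 1) x • lmap (a (i + 1)) (b (i + 1))
        + lam (i + 1) x • lmap (a (i - 1)) (b (i - 1))).smulRight (γ i))) x := by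
    intro x
    apply HasFDerivAt.fun_sum
    intro i _
    exact ((hlamD (i - 1) x).mul (hlamD (i + 1) x)).smul_const (γ i)
  have hΦ : ∀ (x w : Fin 2 → ℝ) (i : Fin 2),
      fderiv ℝ (fun y => ∑ i : ZMod 3, (lam (i - 1) y * lam (i + 1) y) • γ i) x w i =
      ∑ m : ZMod 3, (lam (m - 1) x * (a (m + 1) * w 0 + b (m + 1) * w 1)
        + lam (m + 1) x * (a (m - 1) * w 0 + b (m - 1) * w 1)) * γ m i := by
    intro x w i
    rw [(hr x).fderiv]
    simp only [ContinuousLinearMap.sum_apply, ContinuousLinearMap.smulRight_apply,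
      ContinuousLinearMap.add_apply, ContinuousLinearMap.smul_apply, lmap_apply,
      smul_eq_mul, Finset.sum_apply, Pi.smul_apply]
  have hτe : ∀ (x : Fin 2 → ℝ) (i j : Fin 2),
      CurlS (fun y => ∑ i : ZMod 3, (lam (i - 1) y * lam (i + 1) y) • γ i) x i j =
      2⁻¹ * ((if j = 0 then
          -(∑ m : ZMod 3, (lam (m - 1) x * b (m + 1) + lam (m + 1) x * b (m - 1)) * γ m i)
        else
          ∑ m : ZMod 3, (lam (m - 1) x * a (m + 1) + lam (m + 1) x * a (m - 1)) * γ m i)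
      + (if i = 0 then
          -(∑ m : ZMod 3, (lam (m - 1) x * b (m + 1) + lam (m + 1) x * b (m - 1)) * γ m j)
        else
          ∑ m : ZMod 3, (lam (m - 1) x * a (m + 1) + lam (m + 1) x * a (m - 1)) * γ m j)) := by
    intro x i j
    simp only [CurlS, Curl, Matrix.smul_apply, Matrix.add_apply, Matrix.transpose_apply,
      Matrix.of_apply, hΦ, smul_eq_mul]
    norm_num
  have hAff : ∀ (i j : Fin 2),
      IsAff (fun x => CurlS (fun y => ∑ i : ZMod 3, (lam (i - 1) y * lam (i + 1) y) • γ i) x i j) := by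
    intro i j
    have hbase : ∀ (d : ZMod 3 → ℝ) (jj : Fin 2),
        IsAff (fun x => ∑ m : ZMod 3, (lam (m - 1) x * d (m + 1) + lam (m + 1) x * d (m - 1)) * γ m jj) := by
      intro d jj
      apply isAff_sum
      intro m _
      apply IsAff.mul_const
      have h1 : IsAff (lam (m - 1)) := ⟨_, _, _, hab (m - 1)⟩
      have h2 : IsAff (lam (m + 1)) := ⟨_, _, _, hab (m + 1)⟩
      exact (h1.mul_const _).add (h2.mul_const _)
    have key : ∀ (f1 f2 : (Fin 2 → ℝ) → ℝ), IsAff f1 → IsAff f2 →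
        IsAff (fun x => 2⁻¹ * (f1 x + f2 x)) := fun f1 f2 h1 h2 => (h1.add h2).const_mul _
    have hfe := funext fun (x : Fin 2 → ℝ) => hτe x i j
    rw [show (fun x => CurlS (fun y => ∑ i : ZMod 3, (lam (i - 1) y * lam (i + 1) y) • γ i) x i j) = _ from hfe]
    by_cases hj : j = 0 <;> by_cases hi : i = 0 <;>
      simp only [hj, hi, if_true, if_false, eq_self_iff_true, if_neg, reduceIte] <;>
      apply key <;>
      first | exact (hbase _ _).neg | exact hbase _ _
  have hD : ∀ (g : Fin 2 → ℝ) (i j : Fin 2),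
      DirD (fun x => CurlS (fun y => ∑ i : ZMod 3, (lam (i - 1) y * lam (i + 1) y) • γ i) x) g i j
      = CurlS (fun y => ∑ i : ZMod 3, (lam (i - 1) y * lam (i + 1) y) • γ i) g i j
        - CurlS (fun y => ∑ i : ZMod 3, (lam (i - 1) y * lam (i + 1) y) • γ i) 0 i j := by
    intro g i j
    simp only [DirD, Matrix.of_apply]
    exact (hAff i j).fderiv_eval g
  have hsum : ∀ f : ZMod 3 → ℝ, ∑ m : ZMod 3, f m = f (k - 1) + f k + f (k + 1) :=
    fun f => zmod3_sum f k
  have e1 : k - 1 - 1 = k + 1 := by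
    rw [sub_sub, sub_eq_add_neg, show (-(1 + 1) : ZMod 3) = 1 by decide]
  have e2 : k - 1 + 1 = k := by ring
  have e3 : k + 1 - 1 = k := by ring
  have e4 : k + 1 + 1 = k - 1 := by
    rw [add_assoc, sub_eq_add_neg, show ((1 : ZMod 3) + 1) = -1 by decide]
  have hne1 : k + 1 ≠ k - 1 := by
    intro h
    have h2 : (1 : ZMod 3) = -1 := by
      apply add_left_cancel (a := k); rw [← sub_eq_add_neg]; exact h
    exact absurd h2 (by decide)
  have hne2 : k ≠ k + 1 := by
    intro h
    have h2 : (0 : ZMod 3) = 1 := by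
      apply add_left_cancel (a := k); rw [add_zero]; exact h
    exact absurd h2 (by decide)
  have hne3 : k ≠ k - 1 := by
    intro h
    have h2 : (0 : ZMod 3) = -1 := by
      apply add_left_cancel (a := k); rw [add_zero, ← sub_eq_add_neg]; exact h
    exact absurd h2 (by decide)
  have hEd : ∀ m, a m * (p (k + 1) 0 - p (k - 1) 0) + b m * (p (k + 1) 1 - p (k - 1) 1)
      = (if m = k + 1 then (1 : ℝ) else 0) - (if m = k - 1 then (1 : ℝ) else 0) := by
    intro m
    have h1 := hlam_val m (k + 1)
    have h2 := hlam_val m (k - 1)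
    rw [hab] at h1 h2
    linear_combination h1 - h2
  have hdp : a (k + 1) * (p (k + 1) 0 - p (k - 1) 0) + b (k + 1) * (p (k + 1) 1 - p (k - 1) 1) = 1 := by
    have h := hEd (k + 1); rw [if_pos rfl, if_neg hne1] at h; linarith
  have hdm : a (k - 1) * (p (k + 1) 0 - p (k - 1) 0) + b (k - 1) * (p (k + 1) 1 - p (k - 1) 1) = -1 := by
    have h := hEd (k - 1); rw [if_pos rfl, if_neg hne1.symm] at h; linarith
  have hdk : a k * (p (k + 1) 0 - p (k - 1) 0) + b k * (p (k + 1) 1 - p (k - 1) 1) = 0 := by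
    have h := hEd k; rw [if_neg hne2, if_neg hne3] at h; linarith
  have hperp : n k 0 * (p (k + 1) 0 - p (k - 1) 0) + n k 1 * (p (k + 1) 1 - p (k - 1) 1) = 0 := by
    have h := hn_perp k
    simpa [dotProduct, Fin.sum_univ_two] using h
  obtain ⟨σ, hσdef⟩ : ∃ σ : ℝ, σ = (p (k + 1) 1 - p (k - 1) 1) * n k 0
      - (p (k + 1) 0 - p (k - 1) 0) * n k 1 := ⟨_, rfl⟩
  obtain ⟨U, hUdef⟩ : ∃ U : ZMod 3 → ℝ, U = fun m => b m * n k 0 - a m * n k 1 := ⟨_, rfl⟩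
  obtain ⟨V, hVdef⟩ : ∃ V : ZMod 3 → ℝ, V = fun m => a m * n k 0 + b m * n k 1 := ⟨_, rfl⟩
  have hU : ∀ m, U m = b m * n k 0 - a m * n k 1 := fun m => by rw [hUdef]
  have hV : ∀ m, V m = a m * n k 0 + b m * n k 1 := fun m => by rw [hVdef]
  have ha : ∀ m, a m = V m * n k 0 - U m * n k 1 := by
    intro m
    linear_combination (-(n k 0)) * hV m + (n k 1) * hU m + (-(a m)) * hn_unit k
  have hb : ∀ m, b m = V m * n k 1 + U m * n k 0 := by
    intro m
    linear_combination (-(n k 1)) * hV m + (-(n k 0)) * hU m + (-(b m)) * hn_unit k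
  have hE0 : p (k + 1) 0 - p (k - 1) 0 = -(σ * n k 1) := by
    linear_combination n k 0 * hperp - (p (k + 1) 0 - p (k - 1) 0) * hn_unit k + (n k 1) * hσdef
  have hE1 : p (k + 1) 1 - p (k - 1) 1 = σ * n k 0 := by
    linear_combination n k 1 * hperp - n k 0 * hσdef - (p (k + 1) 1 - p (k - 1) 1) * hn_unit k
  have hLσ : L k ^ 2 = σ ^ 2 := by
    have h0 : (0 : ℝ) ≤ (p (k + 1) 0 - p (k - 1) 0) ^ 2 + (p (k + 1) 1 - p (k - 1) 1) ^ 2 := by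
      positivity
    have hsq : L k ^ 2 = (p (k + 1) 0 - p (k - 1) 0) ^ 2 + (p (k + 1) 1 - p (k - 1) 1) ^ 2 := by
      rw [hL k]; exact Real.sq_sqrt h0
    rw [hsq, hE0, hE1]; linear_combination σ ^ 2 * hn_unit k
  have hup : σ * U (k + 1) = 1 := by
    rw [hE0, hE1] at hdp
    rw [hU]
    linear_combination hdp
  have hum : σ * U (k - 1) = -1 := by
    rw [hE0, hE1] at hdm
    rw [hU]
    linear_combination hdm
  have huk : σ * U k = 0 := by
    rw [hE0, hE1] at hdk
    rw [hU]
    linear_combination hdk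
  constructor
  · simp only [dotProduct, Matrix.mulVec, Fin.sum_univ_two, hD, hτe]
    norm_num
    simp only [hsum, e1, e2, e3, e4, hab, ht, Matrix.cons_val_zero, Matrix.cons_val_one,
      Matrix.head_cons, Pi.zero_apply]
    simp only [ha, hb]
    linear_combination ((n k 1) * (σ) * (U k) * (γ (k - 1) 1) + (n k 1) * (σ) * (U (k - 1)) * (γ k 1) + (n k 0) * (σ) * (U k) * (γ (k - 1) 0) + (n k 0) * (σ) * (U (k - 1)) * (γ k 0)) * (hup) + ((n k 1) * (γ k 1) + (n k 1) * (σ) * (U k) * (γ (k + 1) 1) + (n k 0) * (γ k 0) + (n k 0) * (σ) * (U k) * (γ (k + 1) 0)) * (hum) + ((-1:ℝ) * (n k 1) * (γ (k + 1) 1) + (n k 1) * (γ (k - 1) 1) + (-1:ℝ) * (n k 0) * (γ (k + 1) 0) + (n k 0) * (γ (k - 1) 0)) * (huk) + ((n k 1) * (n k 1) * (n k 1) * (n k 1) * (n k 1) * (U k) * (U (k + 1)) * (γ (k - 1) 1) + (n k 1) * (n k 1) * (n k 1) * (n k 1) * (n k 1) * (U (k - 1)) * (U (k + 1)) * (γ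 k 1) + (n k 1) * (n k 1) * (n k 1) * (n k 1) * (n k 1) * (U (k - 1)) * (U k) * (γ (k + 1) 1) + (n k 0) * (n k 1) * (n k 1) * (n k 1) * (n k 1) * (U k) * (U (k + 1)) * (γ (k - 1) 0) + (n k 0) * (n k 1) * (n k 1) * (n k 1) * (n k 1) * (U (k - 1)) * (U (k + 1)) * (γ k 0) + (n k 0) * (n k 1) * (n k 1) * (n k 1) * (n k 1) * (U (k - 1)) * (U k) * (γ (k + 1) 0) + (2:ℝ) * (n k 0) * (n k 0) * (n k 1) * (n k 1) * (n k 1) * (U k) * (U (k + 1)) * (γ (k - 1) 1) + (2:ℝ) * (n k 0) * (n k 0) * (n k 1) * (n k 1) * (n k 1) * (U (k - 1)) * (U (k + 1)) * (γ k 1) + (2:ℝ) * (n k 0) * (n k 0) * (n k 1) * (n k 1) * (n k 1) * (U (k - 1)) * (U k) * (γ (k + 1) 1) + (2:ℝ) * (n k 0) * (n k 0) * (n k 0) * (n k 1) * (n k 1) * (U k) * (U (k + 1)) * (γ (k - 1) 0) + (2:ℝ) * (n k 0) * (n k 0) * (n k 0) * (n k 1) * (n k 1) * (U (k - 1)) *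 (U (k + 1)) * (γ k 0) + (2:ℝ) * (n k 0) * (n k 0) * (n k 0) * (n k 1) * (n k 1) * (U (k - 1)) * (U k) * (γ (k + 1) 0) + (n k 0) * (n k 0) * (n k 0) * (n k 0) * (n k 1) * (U k) * (U (k + 1)) * (γ (k - 1) 1) + (n k 0) * (n k 0) * (n k 0) * (n k 0) * (n k 1) * (U (k - 1)) * (U (k + 1)) * (γ k 1) + (n k 0) * (n k 0) * (n k 0) * (n k 0) * (n k 1) * (U (k - 1)) * (U k) * (γ (k + 1) 1) + (n k 0) * (n k 0) * (n k 0) * (n k 0) * (n k 0) * (U k) * (U (k + 1)) * (γ (k - 1) 0) + (n k 0) * (n k 0) * (n k 0) * (n k 0) * (n k 0) * (U (k - 1)) * (U (k + 1)) * (γ k 0) + (n k 0) * (n k 0) * (n k 0) * (n k 0) * (n k 0) * (U (k - 1)) * (U k) * (γ (k + 1) 0)) * (hLσ) + ((n k 1) * (σ) * (σ) * (U k) * (U (k + 1)) * (γ (k - 1) 1) + (n k 1) * (σ) * (σ) * (U (k - 1)) * (U (k + 1)) * (γ k 1) + (n k 1) * (σ) * (σ) * (U (k - 1)) * (U k) *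 (γ (k + 1) 1) + (n k 1) * (n k 1) * (n k 1) * (σ) * (σ) * (U k) * (U (k + 1)) * (γ (k - 1) 1) + (n k 1) * (n k 1) * (n k 1) * (σ) * (σ) * (U (k - 1)) * (U (k + 1)) * (γ k 1) + (n k 1) * (n k 1) * (n k 1) * (σ) * (σ) * (U (k - 1)) * (U k) * (γ (k + 1) 1) + (n k 0) * (σ) * (σ) * (U k) * (U (k + 1)) * (γ (k - 1) 0) + (n k 0) * (σ) * (σ) * (U (k - 1)) * (U (k + 1)) * (γ k 0) + (n k 0) * (σ) * (σ) * (U (k - 1)) * (U k) * (γ (k + 1) 0) + (n k 0) * (n k 1) * (n k 1) * (σ) * (σ) * (U k) * (U (k + 1)) * (γ (k - 1) 0) + (n k 0) * (n k 1) * (n k 1) * (σ) * (σ) * (U (k - 1)) * (U (k + 1)) * (γ k 0) + (n k 0) * (n k 1) * (n k 1) * (σ) * (σ) * (U (k - 1)) * (U k) * (γ (k + 1) 0) + (n k 0) * (n k 0) * (n k 1) * (σ) * (σ) * (U k) * (U (k + 1)) * (γ (k - 1) 1) + (n k 0) * (n k 0) * (n k 1) * (σ) * (σ) * (U (k - 1))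 * (U (k + 1)) * (γ k 1) + (n k 0) * (n k 0) * (n k 1) * (σ) * (σ) * (U (k - 1)) * (U k) * (γ (k + 1) 1) + (n k 0) * (n k 0) * (n k 0) * (σ) * (σ) * (U k) * (U (k + 1)) * (γ (k - 1) 0) + (n k 0) * (n k 0) * (n k 0) * (σ) * (σ) * (U (k - 1)) * (U (k + 1)) * (γ k 0) + (n k 0) * (n k 0) * (n k 0) * (σ) * (σ) * (U (k - 1)) * (U k) * (γ (k + 1) 0)) * (hn_unit k)
  · simp only [dotProduct, Matrix.mulVec, Fin.sum_univ_two, hD, hτe]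
    norm_num
    simp only [hsum, e1, e2, e3, e4, hab, ht, Matrix.cons_val_zero, Matrix.cons_val_one,
      Matrix.head_cons, Pi.zero_apply]
    simp only [ha, hb]
    linear_combination ((-1:ℝ) * (n k 1) * (σ) * (U k) * (γ (k - 1) 0) + (-1:ℝ) * (n k 1) * (σ) * (U (k - 1)) * (γ k 0) + (n k 0) * (σ) * (U k) * (γ (k - 1) 1) + (n k 0) * (σ) * (U (k - 1)) * (γ k 1)) * (hup) + ((-1:ℝ) * (n k 1) * (γ k 0) + (-1:ℝ) * (n k 1) * (σ) * (U k) * (γ (k + 1) 0) + (n k 0) * (γ k 1) + (n k 0) * (σ) * (U k) * (γ (k + 1) 1)) * (hum) + ((n k 1) * (γ (k + 1) 0) + (-1:ℝ) * (n k 1) * (γ (k - 1) 0) + (-1:ℝ) * (n k 0) * (γ (k + 1) 1) + (n k 0) * (γ (k - 1) 1)) * (huk) + ((-1:ℝ) * (n k 1) * (n k 1) * (n k 1) * (n k 1) * (n k 1) * (U k) * (U (k + 1)) * (γ (k - 1) 0) + (-1:ℝ) * (n k 1) * (n k 1) * (n k 1) * (n k 1) * (n k 1) * (U (k - 1)) *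 (U (k + 1)) * (γ k 0) + (-1:ℝ) * (n k 1) * (n k 1) * (n k 1) * (n k 1) * (n k 1) * (U (k - 1)) * (U k) * (γ (k + 1) 0) + (n k 0) * (n k 1) * (n k 1) * (n k 1) * (n k 1) * (U k) * (U (k + 1)) * (γ (k - 1) 1) + (n k 0) * (n k 1) * (n k 1) * (n k 1) * (n k 1) * (U (k - 1)) * (U (k + 1)) * (γ k 1) + (n k 0) * (n k 1) * (n k 1) * (n k 1) * (n k 1) * (U (k - 1)) * (U k) * (γ (k + 1) 1) + (-2:ℝ) * (n k 0) * (n k 0) * (n k 1) * (n k 1) * (n k 1) * (U k) * (U (k + 1)) * (γ (k - 1) 0) + (-2:ℝ) * (n k 0) * (n k 0) * (n k 1) * (n k 1) * (n k 1) * (U (k - 1)) * (U (k + 1)) * (γ k 0) + (-2:ℝ) * (n k 0) * (n k 0) * (n k 1) * (n k 1) * (n k 1) * (U (k - 1)) * (U k) * (γ (k + 1) 0) + (2:ℝ) * (n k 0) * (n k 0) * (n k 0) * (n k 1) * (n k 1) * (U k) * (U (k + 1)) * (γ (k - 1) 1) + (2:ℝ) * (n k 0) * (n k 0) * (n k 0)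 * (n k 1) * (n k 1) * (U (k - 1)) * (U (k + 1)) * (γ k 1) + (2:ℝ) * (n k 0) * (n k 0) * (n k 0) * (n k 1) * (n k 1) * (U (k - 1)) * (U k) * (γ (k + 1) 1) + (-1:ℝ) * (n k 0) * (n k 0) * (n k 0) * (n k 0) * (n k 1) * (U k) * (U (k + 1)) * (γ (k - 1) 0) + (-1:ℝ) * (n k 0) * (n k 0) * (n k 0) * (n k 0) * (n k 1) * (U (k - 1)) * (U (k + 1)) * (γ k 0) + (-1:ℝ) * (n k 0) * (n k 0) * (n k 0) * (n k 0) * (n k 1) * (U (k - 1)) * (U k) * (γ (k + 1) 0) + (n k 0) * (n k 0) * (n k 0) * (n k 0) * (n k 0) * (U k) * (U (k + 1)) * (γ (k - 1) 1) + (n k 0) * (n k 0) * (n k 0) * (n k 0) * (n k 0) * (U (k - 1)) * (U (k + 1)) * (γ k 1) + (n k 0) * (n k 0) * (n k 0) * (n k 0) * (n k 0) * (U (k - 1)) * (U k) * (γ (k + 1) 1)) * (hLσ) + ((-1:ℝ) * (n k 1) * (σ) * (σ) * (U k) * (U (k + 1)) * (γ (k - 1) 0) + (-1:ℝ) * (n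 k 1) * (σ) * (σ) * (U (k - 1)) * (U (k + 1)) * (γ k 0) + (-1:ℝ) * (n k 1) * (σ) * (σ) * (U (k - 1)) * (U k) * (γ (k + 1) 0) + (-1:ℝ) * (n k 1) * (n k 1) * (n k 1) * (σ) * (σ) * (U k) * (U (k + 1)) * (γ (k - 1) 0) + (-1:ℝ) * (n k 1) * (n k 1) * (n k 1) * (σ) * (σ) * (U (k - 1)) * (U (k + 1)) * (γ k 0) + (-1:ℝ) * (n k 1) * (n k 1) * (n k 1) * (σ) * (σ) * (U (k - 1)) * (U k) * (γ (k + 1) 0) + (n k 0) * (σ) * (σ) * (U k) * (U (k + 1)) * (γ (k - 1) 1) + (n k 0) * (σ) * (σ) * (U (k - 1)) * (U (k + 1)) * (γ k 1) + (n k 0) * (σ) * (σ) * (U (k - 1)) * (U k) * (γ (k + 1) 1) + (n k 0) * (n k 1) * (n k 1) * (σ) * (σ) * (U k) * (U (k + 1)) * (γ (k - 1) 1) + (n k 0) * (n k 1) * (n k 1) * (σ) * (σ) * (U (k - 1)) * (U (k + 1)) * (γ k 1) + (n k 0) * (n k 1) * (n k 1) * (σ) * (σ) * (U (k - 1)) *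 (U k) * (γ (k + 1) 1) + (-1:ℝ) * (n k 0) * (n k 0) * (n k 1) * (σ) * (σ) * (U k) * (U (k + 1)) * (γ (k - 1) 0) + (-1:ℝ) * (n k 0) * (n k 0) * (n k 1) * (σ) * (σ) * (U (k - 1)) * (U (k + 1)) * (γ k 0) + (-1:ℝ) * (n k 0) * (n k 0) * (n k 1) * (σ) * (σ) * (U (k - 1)) * (U k) * (γ (k + 1) 0) + (n k 0) * (n k 0) * (n k 0) * (σ) * (σ) * (U k) * (U (k + 1)) * (γ (k - 1) 1) + (n k 0) * (n k 0) * (n k 0) * (σ) * (σ) * (U (k - 1)) * (U (k + 1)) * (γ k 1) + (n k 0) * (n k 0) * (n k 0) * (σ) * (σ) * (U (k - 1)) * (U k) * (γ (k + 1) 1)) * (hn_unit k)
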